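/- (Gradient-descent trajectories are permutation-equivariant at every step.) In the setting where both L_y and L_{y∘σ} are differentiable on E = EuclideanSpace ℝ (Fin p) × (Fin N → EuclideanSpace ℝ (Fin d)), let (θ_k, H_k) be the gradient-descent iterates for L_y starting from (θ₀, H₀) with learning rate η, and let (θ'_k, H'_k) be the gradient-descent iterates for L_{y∘σ} starting from (θ₀, H₀∘σ) with the same learning rate. Then for every k ∈ ℕ: θ'_k = θ_k, H'_k = H_k∘σ, and L_{y∘σ}(θ'_k, H'_k) = L_y(θ_k, H_k). -/

import Mathlib

noncomputable section

/-- The product Hilbert space `E` of network parameters and hash tables. -/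
abbrev DinerParamSpace (p N d : ℕ) :=
  WithLp 2 ((EuclideanSpace ℝ (Fin p)) × (PiLp 2 fun _ : Fin N => EuclideanSpace ℝ (Fin d)))

/-- The DINER loss as a function on the product Hilbert space. -/
def dinerLossE {N p d m : ℕ}
    (f : EuclideanSpace ℝ (Fin p) → EuclideanSpace ℝ (Fin d) → (Fin m → ℝ))
    (ℓ : (Fin m → ℝ) → (Fin m → ℝ) → ℝ)
    (y : Fin N → (Fin m → ℝ)) (x : DinerParamSpace p N d) : ℝ :=
  ∑ i : Fin N, ℓ (f x.fst (x.snd i)) (y i)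

/-- Gradient-descent iterates with learning rate `η`, started at `x₀`. -/
def dinerGDIter {N p d m : ℕ}
    (f : EuclideanSpace ℝ (Fin p) → EuclideanSpace ℝ (Fin d) → (Fin m → ℝ))
    (ℓ : (Fin m → ℝ) → (Fin m → ℝ) → ℝ)
    (y : Fin N → (Fin m → ℝ)) (η : ℝ)
    (x₀ : DinerParamSpace p N d) : ℕ → DinerParamSpace p N d
  | 0 => x₀
  | k + 1 => dinerGDIter f ℓ y η x₀ k - η • gradient (dinerLossE f ℓ y) (dinerGDIter f ℓ y η x₀ k)

/-- The permutation isometry on the product Hilbert space: `(θ, H) ↦ (θ, H ∘ σ)`. -/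
def permIso {N p d : ℕ} (σ : Equiv.Perm (Fin N)) :
    DinerParamSpace p N d ≃ₗᵢ[ℝ] DinerParamSpace p N d where
  toFun x := (WithLp.equiv 2 ((EuclideanSpace ℝ (Fin p)) × (PiLp 2 fun _ : Fin N => EuclideanSpace ℝ (Fin d)))).symm (x.fst, (WithLp.toLp 2 fun i => x.snd (σ i) : PiLp 2 fun _ : Fin N => EuclideanSpace ℝ (Fin d)))
  invFun x := (WithLp.equiv 2 ((EuclideanSpace ℝ (Fin p)) × (PiLp 2 fun _ : Fin N => EuclideanSpace ℝ (Fin d)))).symm (x.fst, (WithLp.toLp 2 fun i => x.snd (σ.symm i) : PiLp 2 fun _ : Fin N => EuclideanSpace ℝ (Fin d)))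
  map_add' x y := rfl
  map_smul' c x := rfl
  left_inv x := (WithLp.ext_iff _).2 (Prod.ext rfl ((WithLp.ext_iff _).2 (funext fun i => congrArg x.snd.ofLp (σ.apply_symm_apply i))))
  right_inv x := (WithLp.ext_iff _).2 (Prod.ext rfl ((WithLp.ext_iff _).2 (funext fun i => congrArg x.snd.ofLp (σ.symm_apply_apply i))))
  norm_map' x := by
    show ‖(WithLp.equiv 2 ((EuclideanSpace ℝ (Fin p)) × (PiLp 2 fun _ : Fin N => EuclideanSpace ℝ (Fin d)))).symm (x.fst, (WithLp.toLp 2 fun i => x.snd (σ i) : PiLp 2 fun _ : Fin N => EuclideanSpace ℝ (Fin d)))‖ = ‖x‖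
    rw [WithLp.prod_norm_eq_of_L2, WithLp.prod_norm_eq_of_L2]
    have h3 : ‖((WithLp.equiv 2 ((EuclideanSpace ℝ (Fin p)) × (PiLp 2 fun _ : Fin N => EuclideanSpace ℝ (Fin d)))).symm (x.fst, (WithLp.toLp 2 fun i => x.snd (σ i) : PiLp 2 fun _ : Fin N => EuclideanSpace ℝ (Fin d)))).snd‖ = ‖x.snd‖ := by
      have h2 : ((WithLp.equiv 2 ((EuclideanSpace ℝ (Fin p)) × (PiLp 2 fun _ : Fin N => EuclideanSpace ℝ (Fin d)))).symm (x.fst, (WithLp.toLp 2 fun i => x.snd (σ i) : PiLp 2 fun _ : Fin N => EuclideanSpace ℝ (Fin d)))).snd =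
          (LinearIsometryEquiv.piLpCongrLeft 2 ℝ (EuclideanSpace ℝ (Fin d)) σ.symm) x.snd := by
        refine (WithLp.ext_iff _).2 (funext fun i => ?_)
        simp [LinearIsometryEquiv.piLpCongrLeft_apply, Equiv.piCongrLeft']
      rw [h2, LinearIsometryEquiv.norm_map]
    rw [h3]
    rfl

@[simp] lemma permIso_fst {N p d : ℕ} (σ : Equiv.Perm (Fin N)) (x : DinerParamSpace p N d) :
    (permIso σ x).fst = x.fst := rfl

@[simp] lemma permIso_snd {N p d : ℕ} (σ : Equiv.Perm (Fin N)) (x : DinerParamSpace p N d) :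
    (permIso σ x).snd = fun i => x.snd (σ i) := rfl

@[simp] lemma permIso_symm_fst {N p d : ℕ} (σ : Equiv.Perm (Fin N)) (x : DinerParamSpace p N d) :
    ((permIso σ).symm x).fst = x.fst := rfl

@[simp] lemma permIso_symm_snd {N p d : ℕ} (σ : Equiv.Perm (Fin N)) (x : DinerParamSpace p N d) :
    ((permIso σ).symm x).snd = fun i => x.snd (σ.symm i) := rfl

/-- Gradient transforms naturally under a linear isometry equivalence. -/
lemma gradient_comp_isometry {F G : Type*}
    [NormedAddCommGroup F] [InnerProductSpace ℝ F] [CompleteSpace F]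
    [NormedAddCommGroup G] [InnerProductSpace ℝ G] [CompleteSpace G]
    (T : F ≃ₗᵢ[ℝ] G) (g : G → ℝ) (x : F) :
    gradient (fun z => g (T z)) x = T.symm (gradient g (T x)) := by
  have hfd : fderiv ℝ (fun z => g (T z)) x =
      (fderiv ℝ g (T x)).comp (T.toContinuousLinearEquiv : F →L[ℝ] G) := by
    have := T.toContinuousLinearEquiv.comp_right_fderiv (f := g) (x := x)
    simpa [Function.comp_def] using this
  unfold gradient
  rw [hfd]
  apply (InnerProductSpace.toDual ℝ F).injective
  rw [LinearIsometryEquiv.apply_symm_apply]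
  ext v
  have h1 : (InnerProductSpace.toDual ℝ F)
      (T.symm ((InnerProductSpace.toDual ℝ G).symm (fderiv ℝ g (T x)))) v =
      inner (𝕜 := ℝ) (T.symm ((InnerProductSpace.toDual ℝ G).symm (fderiv ℝ g (T x)))) v := rfl
  rw [h1]
  have h2 : inner (𝕜 := ℝ) (T.symm ((InnerProductSpace.toDual ℝ G).symm (fderiv ℝ g (T x)))) v =
      inner (𝕜 := ℝ) ((InnerProductSpace.toDual ℝ G).symm (fderiv ℝ g (T x))) (T v) := by
    rw [← T.inner_map_map, LinearIsometryEquiv.apply_symm_apply]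
  rw [h2, InnerProductSpace.toDual_symm_apply]
  rfl

lemma dinerLossE_perm {N p d m : ℕ}
    (f : EuclideanSpace ℝ (Fin p) → EuclideanSpace ℝ (Fin d) → (Fin m → ℝ))
    (ℓ : (Fin m → ℝ) → (Fin m → ℝ) → ℝ)
    (y : Fin N → (Fin m → ℝ)) (σ : Equiv.Perm (Fin N)) (x : DinerParamSpace p N d) :
    dinerLossE f ℓ (y ∘ σ) x = dinerLossE f ℓ y ((permIso σ).symm x) := by
  unfold dinerLossE
  rw [permIso_symm_fst]
  rw [← Equiv.sum_comp σ (fun j => ℓ (f x.fst (((permIso σ).symm x).snd j)) (y j))]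
  refine Finset.sum_congr rfl fun i _ => ?_
  simp only [permIso_symm_snd, Function.comp_apply]
  rw [Equiv.symm_apply_apply]

/-- Gradient-descent trajectories are permutation-equivariant at every step:
`θ'_k = θ_k`, `H'_k = H_k ∘ σ`, and `L_{y∘σ}(θ'_k, H'_k) = L_y(θ_k, H_k)`. -/
theorem dinerGDIter_comp_perm {N p d m : ℕ}
    (f : EuclideanSpace ℝ (Fin p) → EuclideanSpace ℝ (Fin d) → (Fin m → ℝ))
    (ℓ : (Fin m → ℝ) → (Fin m → ℝ) → ℝ)
    (y : Fin N → (Fin m → ℝ)) (σ : Equiv.Perm (Fin N))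
    (hdiff : ∀ i : Fin N,
      Differentiable ℝ (fun q : (EuclideanSpace ℝ (Fin p)) × (EuclideanSpace ℝ (Fin d)) =>
        ℓ (f q.1 q.2) (y i)))
    (hdiff' : ∀ i : Fin N,
      Differentiable ℝ (fun q : (EuclideanSpace ℝ (Fin p)) × (EuclideanSpace ℝ (Fin d)) =>
        ℓ (f q.1 q.2) ((y ∘ σ) i)))
    (η : ℝ)
    (θ₀ : EuclideanSpace ℝ (Fin p))
    (H₀ : PiLp 2 fun _ : Fin N => EuclideanSpace ℝ (Fin d)) :
    ∀ k : ℕ,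
      (dinerGDIter f ℓ (y ∘ σ) η (WithLp.toLp 2 (θ₀, WithLp.toLp 2 fun i => H₀ (σ i)) : DinerParamSpace p N d) k).fst =
          (dinerGDIter f ℓ y η (WithLp.toLp 2 (θ₀, H₀) : DinerParamSpace p N d) k).fst ∧
      (dinerGDIter f ℓ (y ∘ σ) η (WithLp.toLp 2 (θ₀, WithLp.toLp 2 fun i => H₀ (σ i)) : DinerParamSpace p N d) k).snd =
          (fun i => (dinerGDIter f ℓ y η (WithLp.toLp 2 (θ₀, H₀) : DinerParamSpace p N d) k).snd (σ i)) ∧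
      dinerLossE f ℓ (y ∘ σ)
          (dinerGDIter f ℓ (y ∘ σ) η (WithLp.toLp 2 (θ₀, WithLp.toLp 2 fun i => H₀ (σ i)) : DinerParamSpace p N d) k) =
        dinerLossE f ℓ y (dinerGDIter f ℓ y η (WithLp.toLp 2 (θ₀, H₀) : DinerParamSpace p N d) k) := by
  set T := permIso (p := p) (d := d) σ with hT
  -- key: the primed iterate equals `T` of the unprimed iterate
  have key : ∀ k : ℕ,
      dinerGDIter f ℓ (y ∘ σ) η (WithLp.toLp 2 (θ₀, WithLp.toLp 2 fun i => H₀ (σ i)) : DinerParamSpace p N d) k =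
        T (dinerGDIter f ℓ y η (WithLp.toLp 2 (θ₀, H₀) : DinerParamSpace p N d) k) := by
    intro k
    induction k with
    | zero =>
      show (WithLp.toLp 2 (θ₀, WithLp.toLp 2 fun i => H₀ (σ i)) : DinerParamSpace p N d) = T (WithLp.toLp 2 (θ₀, H₀))
      rfl
    | succ k ih =>
      show dinerGDIter f ℓ (y ∘ σ) η _ k - η • gradient (dinerLossE f ℓ (y ∘ σ)) _ = _
      rw [ih]
      have hL : dinerLossE f ℓ (y ∘ σ) = fun z => dinerLossE f ℓ y (T.symm z) := by
        funext z
        exact dinerLossE_perm f ℓ y σ z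
      have hgrad : gradient (dinerLossE f ℓ (y ∘ σ))
          (T (dinerGDIter f ℓ y η (WithLp.toLp 2 (θ₀, H₀) : DinerParamSpace p N d) k)) =
          T (gradient (dinerLossE f ℓ y)
            (dinerGDIter f ℓ y η (WithLp.toLp 2 (θ₀, H₀) : DinerParamSpace p N d) k)) := by
        rw [hL]
        have := gradient_comp_isometry T.symm (dinerLossE f ℓ y)
          (T (dinerGDIter f ℓ y η (WithLp.toLp 2 (θ₀, H₀) : DinerParamSpace p N d) k))
        simpa using this
      rw [hgrad, ← map_smul, ← map_sub]
      rfl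
  intro k
  rw [key k]
  refine ⟨rfl, rfl, ?_⟩
  rw [dinerLossE_perm f ℓ y σ, LinearIsometryEquiv.symm_apply_apply]
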